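/- Let q = (q_n)_{n=0}^∞ be a bounded sequence of positive integers, let c^{(n)} = (c^{(n)}_0,…,c^{(n)}_{q_n}) be positive integers with c^{(n)}_0 = c^{(n)}_{q_n} = d_res, let W^{(n)}_m ∈ ℝ^{c^{(n)}_m × c^{(n)}_{m−1}} and b^{(n)}_m ∈ ℝ^{c^{(n)}_m}, and fix activation matrices J^{(n)}_m ∈ 𝒟_{c^{(n)}_m}. Assume: (i) ∑_{k=0}^∞ ∑_{m=1}^{q_k} (∏_{m'=m+1}^{q_k} ‖W^{(k)}_{m'}‖) ‖b^{(k)}_m‖ < +∞; (ii) the tail infinite product ∏_{k=n}^{∞} (∏_{m=1}^{q_k} J^{(k)}_m W^{(k)}_m + J^{(k)}_{q_k}) converges for every n ∈ ℕ; (iii) there is a constant C₁ > 0 such that ∏_{k=n'}^{n} (∏_{m=1}^{q_k} ‖W^{(k)}_m‖ + 1) ≤ C₁ for all n' ≤ n. Then the limit lim_{n→∞} B_n = lim_{n→∞} ∑_{k=0}^{n} ∑_{m=1}^{q_k} [∏_{k'=k+1}^{n} (∏_{m'=1}^{q_{k'}} J^{(k')}_{m'} W^{(k')}_{m'} + J^{(k')}_{q_{k'}})]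 (∏_{m'=m+1}^{q_k} J^{(k)}_{m'} W^{(k)}_{m'}) J^{(k)}_m b^{(k)}_m exists in ℝ^{d_res}. -/

import Mathlib

open Filter Matrix Topology
open scoped ENNReal

noncomputable section

/-- The ReLU activation applied componentwise. -/
def relu {d : ℕ} (x : Fin d → ℝ) : Fin d → ℝ := fun i => max (x i) 0

/-- Cast a vector along an equality of dimensions. -/
def castVec {a b : ℕ} (h : a = b) (v : Fin a → ℝ) : Fin b → ℝ := fun i => v (Fin.cast h.symm i)

/-- Cast a matrix along equalities of its dimensions. -/
def mcast {a a' b b' : ℕ} (ha : a = a') (hb : b = b') (M : Matrix (Fin a) (Fin b) ℝ) :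
    Matrix (Fin a') (Fin b') ℝ :=
  M.submatrix (Fin.cast ha.symm) (Fin.cast hb.symm)

/-- Outputs of consecutive fully connected ReLU layers:
`hiddenSeq c W b m x = (σ(W m ⬝ · + b m) ∘ ⋯ ∘ σ(W 1 ⬝ · + b 1)) x` (0-based weight indices). -/
def hiddenSeq (c : ℕ → ℕ) (W : ∀ m, Matrix (Fin (c (m+1))) (Fin (c m)) ℝ)
    (b : ∀ m, Fin (c (m+1)) → ℝ) : (m : ℕ) → (Fin (c 0) → ℝ) → Fin (c m) → ℝ
  | 0 => fun x => x
  | m+1 => fun x => relu ((W m).mulVec (hiddenSeq c W b m x) + b m)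

/-- A residual block with `q` layers (`q ≥ 1`), shortcut connection added before the last ReLU. -/
def resBlock (d q : ℕ) (hq : 0 < q) (c : ℕ → ℕ) (hc0 : c 0 = d) (hcq : c q = d)
    (W : ∀ m, Matrix (Fin (c (m+1))) (Fin (c m)) ℝ)
    (b : ∀ m, Fin (c (m+1)) → ℝ) (x : Fin d → ℝ) : Fin d → ℝ :=
  castVec (show c (q-1+1) = d from (congrArg c (Nat.succ_pred_eq_of_pos hq)).trans hcq)
    (relu ((W (q-1)).mulVec (hiddenSeq c W b (q-1) (castVec hc0.symm x))
      + castVec (show c (q-1+1) = d from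
          (congrArg c (Nat.succ_pred_eq_of_pos hq)).trans hcq).symm x + b (q-1)))

/-- The deep network with shortcut connections: composition of residual blocks `0,…,n`. -/
def resNet (d : ℕ) (q : ℕ → ℕ) (hq : ∀ n, 0 < q n) (c : ℕ → ℕ → ℕ)
    (hc0 : ∀ n, c n 0 = d) (hcq : ∀ n, c n (q n) = d)
    (W : ∀ n m, Matrix (Fin (c n (m+1))) (Fin (c n m)) ℝ)
    (b : ∀ n m, Fin (c n (m+1)) → ℝ) :
    ℕ → (Fin d → ℝ) → Fin d → ℝ
  | 0 => resBlock d (q 0) (hq 0) (c 0) (hc0 0) (hcq 0) (W 0) (b 0)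
  | n+1 => fun x => resBlock d (q (n+1)) (hq (n+1)) (c (n+1)) (hc0 (n+1)) (hcq (n+1))
      (W (n+1)) (b (n+1)) (resNet d q hq c hc0 hcq W b n x)

/-- `J` is a 0/1 diagonal (activation) matrix. -/
def IsActivation {a : ℕ} (J : Matrix (Fin a) (Fin a) ℝ) : Prop :=
  (∀ i, J i i = 0 ∨ J i i = 1) ∧ ∀ i j, i ≠ j → J i j = 0

/-- The pre-activation vector `z` has exactly the sign pattern prescribed by the
activation matrix `J`: positive on the support of `J` and `≤ 0` off it. -/
def inPattern {a : ℕ} (J : Matrix (Fin a) (Fin a) ℝ) (z : Fin a → ℝ) : Prop :=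
  ∀ i, J i i = 1 ↔ 0 < z i

/-- `x` lies in the activation domain of a single residual block w.r.t. `J`. -/
def blockDomain (d q : ℕ) (hq : 0 < q) (c : ℕ → ℕ) (hc0 : c 0 = d) (hcq : c q = d)
    (W : ∀ m, Matrix (Fin (c (m+1))) (Fin (c m)) ℝ)
    (b : ∀ m, Fin (c (m+1)) → ℝ)
    (J : ∀ m, Matrix (Fin (c (m+1))) (Fin (c (m+1))) ℝ) (x : Fin d → ℝ) : Prop :=
  (∀ m, m + 1 < q →
    inPattern (J m) ((W m).mulVec (hiddenSeq c W b m (castVec hc0.symm x)) + b m)) ∧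
  inPattern (J (q-1)) ((W (q-1)).mulVec (hiddenSeq c W b (q-1) (castVec hc0.symm x))
    + castVec (show c (q-1+1) = d from
        (congrArg c (Nat.succ_pred_eq_of_pos hq)).trans hcq).symm x + b (q-1))

/-- The input fed to block `k` (output of the previous blocks; the input itself when `k = 0`). -/
def netInput (d : ℕ) (q : ℕ → ℕ) (hq : ∀ n, 0 < q n) (c : ℕ → ℕ → ℕ)
    (hc0 : ∀ n, c n 0 = d) (hcq : ∀ n, c n (q n) = d)
    (W : ∀ n m, Matrix (Fin (c n (m+1))) (Fin (c n m)) ℝ)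
    (b : ∀ n m, Fin (c n (m+1)) → ℝ) :
    ℕ → (Fin d → ℝ) → Fin d → ℝ
  | 0 => fun x => x
  | k+1 => resNet d q hq c hc0 hcq W b k

/-- Activation domain of the multi-residual-block network `𝒩_{c,q,n}` w.r.t. `J`:
`x ∈ [0,1]^d` and at each layer of each block the pre-activation has the pattern of `J`. -/
def InActDomain (d : ℕ) (q : ℕ → ℕ) (hq : ∀ n, 0 < q n) (c : ℕ → ℕ → ℕ)
    (hc0 : ∀ n, c n 0 = d) (hcq : ∀ n, c n (q n) = d)
    (W : ∀ n m, Matrix (Fin (c n (m+1))) (Fin (c n m)) ℝ)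
    (b : ∀ n m, Fin (c n (m+1)) → ℝ)
    (J : ∀ n m, Matrix (Fin (c n (m+1))) (Fin (c n (m+1))) ℝ)
    (n : ℕ) (x : Fin d → ℝ) : Prop :=
  (∀ i, x i ∈ Set.Icc (0:ℝ) 1) ∧
  ∀ k ≤ n, blockDomain d (q k) (hq k) (c k) (hc0 k) (hcq k) (W k) (b k) (J k)
    (netInput d q hq c hc0 hcq W b k x)

/-- `prodSeg f a n = f n * f (n-1) * ⋯ * f a` (the identity when `n < a`). -/
def prodSeg {α : Type*} [Monoid α] (f : ℕ → α) (a n : ℕ) : α :=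
  ((List.range' a (n + 1 - a)).reverse.map f).prod

/-- `innerProdFrom c W J a m = (J (a+m) W (a+m)) ⋯ (J (a+1) W (a+1)) (J a W a)`,
i.e. the product `∏_{m'=a+1}^{a+m} J_{m'} W_{m'}` in the 1-based indexing of the paper. -/
def innerProdFrom (c : ℕ → ℕ) (W : ∀ m, Matrix (Fin (c (m+1))) (Fin (c m)) ℝ)
    (J : ∀ m, Matrix (Fin (c (m+1))) (Fin (c (m+1))) ℝ) (a : ℕ) :
    (m : ℕ) → Matrix (Fin (c (a + m))) (Fin (c a)) ℝ
  | 0 => (1 : Matrix (Fin (c a)) (Fin (c a)) ℝ)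
  | m+1 => (J (a + m) * W (a + m)) * innerProdFrom c W J a m

/-- The matrix `∏_{m=1}^{q} J_m W_m + J_q` of a residual block. -/
def blockMat (d q : ℕ) (hq : 0 < q) (c : ℕ → ℕ) (hc0 : c 0 = d) (hcq : c q = d)
    (W : ∀ m, Matrix (Fin (c (m+1))) (Fin (c m)) ℝ)
    (J : ∀ m, Matrix (Fin (c (m+1))) (Fin (c (m+1))) ℝ) :
    Matrix (Fin d) (Fin d) ℝ :=
  mcast ((congrArg c (Nat.zero_add q)).trans hcq) hc0 (innerProdFrom c W J 0 q)
    + mcast (show c (q-1+1) = d from (congrArg c (Nat.succ_pred_eq_of_pos hq)).trans hcq)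
        (show c (q-1+1) = d from (congrArg c (Nat.succ_pred_eq_of_pos hq)).trans hcq) (J (q-1))

/-- `Aseq n = ∏_{k=0}^{n} (∏_{m=1}^{q_k} J^{(k)}_m W^{(k)}_m + J^{(k)}_{q_k})`. -/
def Aseq (d : ℕ) (q : ℕ → ℕ) (hq : ∀ n, 0 < q n) (c : ℕ → ℕ → ℕ)
    (hc0 : ∀ n, c n 0 = d) (hcq : ∀ n, c n (q n) = d)
    (W : ∀ n m, Matrix (Fin (c n (m+1))) (Fin (c n m)) ℝ)
    (J : ∀ n m, Matrix (Fin (c n (m+1))) (Fin (c n (m+1))) ℝ) (n : ℕ) :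
    Matrix (Fin d) (Fin d) ℝ :=
  prodSeg (fun k => blockMat d (q k) (hq k) (c k) (hc0 k) (hcq k) (W k) (J k)) 0 n

/-- `∑_{m=1}^{q} (∏_{m'=m+1}^{q} J_{m'} W_{m'}) J_m b_m` for one residual block. -/
def blockBias (d q : ℕ) (c : ℕ → ℕ) (hcq : c q = d)
    (W : ∀ m, Matrix (Fin (c (m+1))) (Fin (c m)) ℝ)
    (b : ∀ m, Fin (c (m+1)) → ℝ)
    (J : ∀ m, Matrix (Fin (c (m+1))) (Fin (c (m+1))) ℝ) : Fin d → ℝ :=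
  ∑ m ∈ (Finset.range q).attach,
    (mcast ((congrArg c (Nat.add_sub_cancel' (Finset.mem_range.mp m.2))).trans hcq) rfl
        (innerProdFrom c W J (m.1+1) (q - (m.1+1)))).mulVec ((J m.1).mulVec (b m.1))

/-- `Bseq n = ∑_{k=0}^{n} ∑_{m=1}^{q_k} [∏_{k'=k+1}^{n} (∏_{m'} J W + J)] (∏_{m'>m} J W) J_m b_m`. -/
def Bseq (d : ℕ) (q : ℕ → ℕ) (hq : ∀ n, 0 < q n) (c : ℕ → ℕ → ℕ)
    (hc0 : ∀ n, c n 0 = d) (hcq : ∀ n, c n (q n) = d)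
    (W : ∀ n m, Matrix (Fin (c n (m+1))) (Fin (c n m)) ℝ)
    (b : ∀ n m, Fin (c n (m+1)) → ℝ)
    (J : ∀ n m, Matrix (Fin (c n (m+1))) (Fin (c n (m+1))) ℝ) (n : ℕ) : Fin d → ℝ :=
  ∑ k ∈ Finset.range (n+1),
    (prodSeg (fun k' => blockMat d (q k') (hq k') (c k') (hc0 k') (hcq k') (W k') (J k'))
        (k+1) n).mulVec
      (blockBias d (q k) (c k) (hcq k) (W k) (b k) (J k))

/-- A family of norms on the spaces `ℝ^m` which is monotone in the sense of the paper. -/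
structure NormFamily where
  N : ∀ m : ℕ, (Fin m → ℝ) → ℝ
  eq_zero_iff : ∀ (m : ℕ) (x : Fin m → ℝ), N m x = 0 ↔ x = 0
  add_le : ∀ (m : ℕ) (x y : Fin m → ℝ), N m (x + y) ≤ N m x + N m y
  smul_eq : ∀ (m : ℕ) (r : ℝ) (x : Fin m → ℝ), N m (r • x) = |r| * N m x
  mono : ∀ (m : ℕ) (x y : Fin m → ℝ), (∀ i, |x i| ≤ |y i|) → N m x ≤ N m y

/-- The operator (matrix) norm induced by a family of vector norms. -/
def NormFamily.op (F : NormFamily) {a b : ℕ} (M : Matrix (Fin a) (Fin b) ℝ) : ℝ :=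
  sSup ((fun x => F.N a (M.mulVec x) / F.N b x) '' {x : Fin b → ℝ | x ≠ 0})

/-- 1-D Toeplitz convolution-with-zero-padding matrix of a filter mask `u ∈ ℝ^{2f+1}`:
`(T1 f d u) a b = u (f - b + a)` when `-f ≤ b - a ≤ f` and `0` otherwise. -/
def T1 (f d : ℕ) (u : Fin (2*f+1) → ℝ) : Matrix (Fin d) (Fin d) ℝ :=
  fun a b =>
    if h : -(f:ℤ) ≤ ((b:ℕ):ℤ) - ((a:ℕ):ℤ) ∧ ((b:ℕ):ℤ) - ((a:ℕ):ℤ) ≤ (f:ℤ) then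
      u ⟨((f:ℤ) - ((b:ℕ):ℤ) + ((a:ℕ):ℤ)).toNat, by omega⟩
    else 0

/-- 2-D block Toeplitz convolution matrix of a mask `v ∈ ℝ^{(2f+1)×(2f+1)}`:
the `(a,b)` block is `T1 f d (v (f - b + a))` when `-f ≤ b - a ≤ f` and `0` otherwise. -/
def T2 (f d : ℕ) (v : Fin (2*f+1) → Fin (2*f+1) → ℝ) :
    Matrix (Fin d × Fin d) (Fin d × Fin d) ℝ :=
  fun P Q =>
    if h : -(f:ℤ) ≤ ((Q.1:ℕ):ℤ) - ((P.1:ℕ):ℤ) ∧ ((Q.1:ℕ):ℤ) - ((P.1:ℕ):ℤ) ≤ (f:ℤ) then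
      T1 f d (v ⟨((f:ℤ) - ((Q.1:ℕ):ℤ) + ((P.1:ℕ):ℤ)).toNat, by omega⟩) P.2 Q.2
    else 0

/-- The block matrix `T(w)` of a multi-channel convolution
with `cin` input channels and `cout` output channels: the `(i,j)` block is `T2 f d (w i j)`. -/
def Tmulti (f d cin cout : ℕ)
    (w : Fin cout → Fin cin → Fin (2*f+1) → Fin (2*f+1) → ℝ) :
    Matrix (Fin cout × Fin d × Fin d) (Fin cin × Fin d × Fin d) ℝ :=
  fun P Q => T2 f d (w P.1 Q.1) P.2 Q.2

/-- Multi-channel 2-D convolution with zero padding, as matrix-vector multiplication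
by the Toeplitz-type matrices `T2`. -/
def convLayer (f d cin cout : ℕ)
    (w : Fin cout → Fin cin → Fin (2*f+1) → Fin (2*f+1) → ℝ)
    (x : Fin cin → Fin d → Fin d → ℝ) : Fin cout → Fin d → Fin d → ℝ :=
  fun i a b => ∑ j, ∑ s, ∑ t, T2 f d (w i j) (a, b) (s, t) * x j s t

/-- Cast the channel index of a tensor along an equality of channel numbers. -/
def castChan {d a b : ℕ} (h : a = b) (x : Fin a → Fin d → Fin d → ℝ) :
    Fin b → Fin d → Fin d → ℝ :=
  fun i => x (Fin.cast h.symm i)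

/-- Hidden layers of a convolutional residual block (with constant-per-channel biases `β`). -/
def convHidden (d : ℕ) (c : ℕ → ℕ) (f : ℕ → ℕ)
    (w : ∀ m, Fin (c (m+1)) → Fin (c m) → Fin (2 * f m + 1) → Fin (2 * f m + 1) → ℝ)
    (β : ∀ m, Fin (c (m+1)) → ℝ) :
    (m : ℕ) → (Fin (c 0) → Fin d → Fin d → ℝ) → Fin (c m) → Fin d → Fin d → ℝ
  | 0 => fun x => x
  | m+1 => fun x i a b =>
      max (convLayer (f m) d (c m) (c (m+1)) (w m) (convHidden d c f w β m x) i a b + β m i) 0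

/-- A convolutional residual block with `Q ≥ 1` convolutional layers and a shortcut connection. -/
def convBlock (d Q : ℕ) (hQ : 0 < Q) (cres : ℕ) (c : ℕ → ℕ)
    (hc0 : c 0 = cres) (hcq : c Q = cres) (f : ℕ → ℕ)
    (w : ∀ m, Fin (c (m+1)) → Fin (c m) → Fin (2 * f m + 1) → Fin (2 * f m + 1) → ℝ)
    (β : ∀ m, Fin (c (m+1)) → ℝ)
    (x : Fin cres → Fin d → Fin d → ℝ) : Fin cres → Fin d → Fin d → ℝ :=
  castChan (show c (Q-1+1) = cres from (congrArg c (Nat.succ_pred_eq_of_pos hQ)).trans hcq)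
    (fun i a b =>
      max (convLayer (f (Q-1)) d (c (Q-1)) (c (Q-1+1)) (w (Q-1))
            (convHidden d c f w β (Q-1) (castChan hc0.symm x)) i a b
          + x (Fin.cast (show c (Q-1+1) = cres from
              (congrArg c (Nat.succ_pred_eq_of_pos hQ)).trans hcq) i) a b
          + β (Q-1) i) 0)

/-- The deep convolutional ResNet without the output layer: sampling layer
`σ(x ∗ w_s + b_s)` (block `0`) followed by the convolutional residual blocks `1,…,n`. -/
def convNet (d cin cres : ℕ) (q : ℕ → ℕ) (hq : ∀ n, 0 < q n)
    (c : ℕ → ℕ → ℕ) (hc00 : c 0 0 = cin) (h01 : c 0 1 = cres)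
    (hc0 : ∀ n, 0 < n → c n 0 = cres) (hcq : ∀ n, 0 < n → c n (q n) = cres)
    (f : ℕ → ℕ → ℕ)
    (w : ∀ n m, Fin (c n (m+1)) → Fin (c n m) → Fin (2 * f n m + 1) → Fin (2 * f n m + 1) → ℝ)
    (β : ∀ n m, Fin (c n (m+1)) → ℝ) :
    ℕ → (Fin cin → Fin d → Fin d → ℝ) → Fin cres → Fin d → Fin d → ℝ
  | 0 => fun x => castChan h01 (fun i a b =>
      max (convLayer (f 0 0) d (c 0 0) (c 0 1) (w 0 0) (castChan hc00.symm x) i a b + β 0 0 i) 0)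
  | n+1 => fun x =>
      convBlock d (q (n+1)) (hq (n+1)) cres (c (n+1)) (hc0 (n+1) (Nat.succ_pos n))
        (hcq (n+1) (Nat.succ_pos n)) (f (n+1)) (w (n+1)) (β (n+1))
        (convNet d cin cres q hq c hc00 h01 hc0 hcq f w β n x)

/-- The ℓ_p norm of a vector, `p ∈ [1,∞]`. -/
def lpNorm (p : ℝ≥0∞) {ι : Type*} [Fintype ι] (x : ι → ℝ) : ℝ :=
  if p = ∞ then ⨆ i, |x i| else (∑ i, |x i| ^ p.toReal) ^ (1 / p.toReal)

/-- The matrix (operator) norm induced by the ℓ_p vector norms. -/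
def opNormP (p : ℝ≥0∞) {α β : Type*} [Fintype α] [Fintype β] (M : Matrix α β ℝ) : ℝ :=
  sSup ((fun x => lpNorm p (M.mulVec x) / lpNorm p x) '' {x : β → ℝ | x ≠ 0})

/-- Maximum absolute column sum of a matrix (the operator norm induced by ℓ₁). -/
def maxColSum {α β : Type*} [Fintype α] [Fintype β] (M : Matrix α β ℝ) : ℝ :=
  ⨆ j, ∑ i, |M i j|

/-- Maximum absolute row sum of a matrix (the operator norm induced by ℓ_∞). -/
def maxRowSum {α β : Type*} [Fintype α] [Fintype β] (M : Matrix α β ℝ) : ℝ :=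
  ⨆ i, ∑ j, |M i j|

/-- The block matrix with blocks `A i j ∈ ℝ^{r×c}`, `i < N`, `j < M`. -/
def blockMatrixOf {N M r c : ℕ} (A : Fin N → Fin M → Matrix (Fin r) (Fin c) ℝ) :
    Matrix (Fin N × Fin r) (Fin M × Fin c) ℝ :=
  fun p q => A p.1 q.1 p.2 q.2

/-- The factor `N^{(n)}_m` of Theorem 5.2: the bound of Lemma 5.1 on `‖T(w)‖_p`. -/
def Nfactor (p : ℝ≥0∞) {f cin cout : ℕ}
    (w : Fin cout → Fin cin → Fin (2*f+1) → Fin (2*f+1) → ℝ) : ℝ :=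
  (⨆ j : Fin cin, ∑ i, ∑ i', ∑ j', |w i j i' j'|) ^ ((1/p).toReal)
    * (⨆ i : Fin cout, ∑ j, ∑ i', ∑ j', |w i j i' j'|) ^ (1 - (1/p).toReal)

/-- Zero padding of a vector `x ∈ ℝ^{din}` to a vector `(x, 0) ∈ ℝ^{d}`. -/
def padVec (din d : ℕ) (x : Fin din → ℝ) : Fin d → ℝ :=
  fun i => if h : (i : ℕ) < din then x ⟨i, h⟩ else 0

/-- The matrix `[Ws  0] ∈ ℝ^{d × d}` obtained by padding `Ws ∈ ℝ^{d × din}` with zero columns. -/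
def padMat (din d : ℕ) (Ws : Matrix (Fin d) (Fin din) ℝ) : Matrix (Fin d) (Fin d) ℝ :=
  fun i j => if h : (j : ℕ) < din then Ws i ⟨j, h⟩ else 0


/-! ### Auxiliary lemmas for stmt3 -/

namespace NormFamily

variable (F : NormFamily)

lemma n_zero (m : ℕ) : F.N m 0 = 0 := (F.eq_zero_iff m 0).mpr rfl

lemma n_nonneg (m : ℕ) (x : Fin m → ℝ) : 0 ≤ F.N m x := by
  have h2 : F.N m (x + -x) ≤ F.N m x + F.N m (-x) := F.add_le m x (-x)
  have h3 : F.N m (-x) = F.N m x := by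
    have := F.smul_eq m (-1) x
    simpa using this
  have h4 : x + -x = 0 := by abel
  rw [h4, F.n_zero, h3] at h2
  linarith

lemma n_pos (m : ℕ) (x : Fin m → ℝ) (hx : x ≠ 0) : 0 < F.N m x :=
  lt_of_le_of_ne (F.n_nonneg m x) fun h => hx ((F.eq_zero_iff m x).mp h.symm)

lemma single_pos (m : ℕ) (i : Fin m) : 0 < F.N m (Pi.single i 1) := by
  refine F.n_pos m _ fun h => ?_
  have := congrFun h i
  simp at this

lemma abs_mul_single_le (m : ℕ) (x : Fin m → ℝ) (i : Fin m) :
    |x i| * F.N m (Pi.single i 1) ≤ F.N m x := by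
  have h1 : Pi.single i (x i) = x i • (Pi.single i 1 : Fin m → ℝ) := by
    ext j
    by_cases hj : j = i <;> simp [Pi.single_apply, hj]
  have h2 : F.N m (Pi.single i (x i)) ≤ F.N m x := by
    refine F.mono m _ _ fun j => ?_
    by_cases hj : j = i <;> simp [Pi.single_apply, hj]
  rw [h1, F.smul_eq] at h2
  exact h2

lemma abs_le_div (m : ℕ) (x : Fin m → ℝ) (i : Fin m) :
    |x i| ≤ F.N m x / F.N m (Pi.single i 1) :=
  (le_div_iff₀ (F.single_pos m i)).mpr (F.abs_mul_single_le m x i)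

lemma n_sum_le {ι : Type*} (m : ℕ) (s : Finset ι) (f : ι → Fin m → ℝ) :
    F.N m (∑ i ∈ s, f i) ≤ ∑ i ∈ s, F.N m (f i) := by
  classical
  induction s using Finset.cons_induction with
  | empty => simp [F.n_zero]
  | cons a s ha ih =>
    rw [Finset.sum_cons, Finset.sum_cons]
    exact le_trans (F.add_le m _ _) (by linarith)

lemma n_le_sum (m : ℕ) (x : Fin m → ℝ) :
    F.N m x ≤ ∑ i, |x i| * F.N m (Pi.single i 1) := by
  have hx : x = ∑ i, Pi.single i (x i) := by
    ext j; simp [Finset.sum_apply, Pi.single_apply]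
  calc F.N m x = F.N m (∑ i, Pi.single i (x i)) := by rw [← hx]
    _ ≤ ∑ i, F.N m (Pi.single i (x i)) := F.n_sum_le m _ _
    _ = ∑ i, |x i| * F.N m (Pi.single i 1) := by
        refine Finset.sum_congr rfl fun i _ => ?_
        have h1 : Pi.single i (x i) = x i • (Pi.single i 1 : Fin m → ℝ) := by
          ext j
          by_cases hj : j = i <;> simp [Pi.single_apply, hj]
        rw [h1, F.smul_eq]

/-- A crude explicit bound on `F.N a (M.mulVec x)` in terms of `F.N b x`. -/
lemma mulVec_crude {a b : ℕ} (M : Matrix (Fin a) (Fin b) ℝ) (x : Fin b → ℝ) :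
    F.N a (M.mulVec x) ≤
      (∑ i, ∑ j, |M i j| * (F.N a (Pi.single i 1) / F.N b (Pi.single j 1))) * F.N b x := by
  calc F.N a (M.mulVec x) ≤ ∑ i, |M.mulVec x i| * F.N a (Pi.single i 1) := F.n_le_sum a _
    _ ≤ ∑ i, (∑ j, |M i j| * (F.N a (Pi.single i 1) / F.N b (Pi.single j 1))) * F.N b x := by
        refine Finset.sum_le_sum fun i _ => ?_
        have h1 : |M.mulVec x i| ≤ ∑ j, |M i j| * (F.N b x / F.N b (Pi.single j 1)) := by
          calc |M.mulVec x i| = |∑ j, M i j * x j| := by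
                rw [Matrix.mulVec, dotProduct]
            _ ≤ ∑ j, |M i j * x j| := Finset.abs_sum_le_sum_abs _ _
            _ ≤ ∑ j, |M i j| * (F.N b x / F.N b (Pi.single j 1)) := by
                refine Finset.sum_le_sum fun j _ => ?_
                rw [abs_mul]
                exact mul_le_mul_of_nonneg_left (F.abs_le_div b x j) (abs_nonneg _)
        calc |M.mulVec x i| * F.N a (Pi.single i 1)
            ≤ (∑ j, |M i j| * (F.N b x / F.N b (Pi.single j 1))) * F.N a (Pi.single i 1) :=
              mul_le_mul_of_nonneg_right h1 (le_of_lt (F.single_pos a i))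
          _ = (∑ j, |M i j| * (F.N a (Pi.single i 1) / F.N b (Pi.single j 1))) * F.N b x := by
              rw [Finset.sum_mul, Finset.sum_mul]
              refine Finset.sum_congr rfl fun j _ => ?_
              ring
    _ = (∑ i, ∑ j, |M i j| * (F.N a (Pi.single i 1) / F.N b (Pi.single j 1))) * F.N b x := by
        rw [Finset.sum_mul]

lemma ratio_bddAbove {a b : ℕ} (M : Matrix (Fin a) (Fin b) ℝ) :
    BddAbove ((fun x => F.N a (M.mulVec x) / F.N b x) '' {x : Fin b → ℝ | x ≠ 0}) := by
  refine ⟨∑ i, ∑ j, |M i j| * (F.N a (Pi.single i 1) / F.N b (Pi.single j 1)), ?_⟩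
  rintro r ⟨x, hx, rfl⟩
  exact (div_le_iff₀ (F.n_pos b x hx)).mpr (F.mulVec_crude M x)

lemma op_le_of {a b : ℕ} (M : Matrix (Fin a) (Fin b) ℝ) (C : ℝ) (hC : 0 ≤ C)
    (h : ∀ x, F.N a (M.mulVec x) ≤ C * F.N b x) : F.op M ≤ C := by
  refine Real.sSup_le ?_ hC
  rintro r ⟨x, hx, rfl⟩
  exact (div_le_iff₀ (F.n_pos b x hx)).mpr (h x)

lemma n_mulVec_le {a b : ℕ} (M : Matrix (Fin a) (Fin b) ℝ) (x : Fin b → ℝ) :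
    F.N a (M.mulVec x) ≤ F.op M * F.N b x := by
  by_cases hx : x = 0
  · subst hx
    simp [Matrix.mulVec_zero, F.n_zero]
  · have h1 : F.N a (M.mulVec x) / F.N b x ≤ F.op M :=
      le_csSup (F.ratio_bddAbove M) ⟨x, hx, rfl⟩
    exact (div_le_iff₀ (F.n_pos b x hx)).mp h1

lemma op_nonneg {a b : ℕ} (hb : 0 < b) (M : Matrix (Fin a) (Fin b) ℝ) : 0 ≤ F.op M := by
  have hx : (Pi.single (⟨0, hb⟩ : Fin b) 1 : Fin b → ℝ) ≠ 0 := by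
    intro h
    have := congrFun h ⟨0, hb⟩
    simp at this
  refine le_trans ?_ (le_csSup (F.ratio_bddAbove M) ⟨_, hx, rfl⟩)
  exact div_nonneg (F.n_nonneg a _) (F.n_nonneg b _)

lemma op_mul_le {a b e : ℕ} (hb : 0 < b) (he : 0 < e)
    (A : Matrix (Fin a) (Fin b) ℝ) (B : Matrix (Fin b) (Fin e) ℝ) :
    F.op (A * B) ≤ F.op A * F.op B := by
  refine F.op_le_of _ _ (mul_nonneg (F.op_nonneg hb A) (F.op_nonneg he B)) fun x => ?_
  rw [← Matrix.mulVec_mulVec]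
  calc F.N a (A.mulVec (B.mulVec x)) ≤ F.op A * F.N b (B.mulVec x) := F.n_mulVec_le A _
    _ ≤ F.op A * (F.op B * F.N e x) :=
        mul_le_mul_of_nonneg_left (F.n_mulVec_le B x) (F.op_nonneg hb A)
    _ = F.op A * F.op B * F.N e x := by ring

lemma act_mulVec_le {a : ℕ} (J : Matrix (Fin a) (Fin a) ℝ) (hJ : IsActivation J)
    (x : Fin a → ℝ) : F.N a (J.mulVec x) ≤ F.N a x := by
  refine F.mono a _ _ fun i => ?_
  have h1 : J.mulVec x i = J i i * x i := by
    rw [Matrix.mulVec, dotProduct]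
    exact Finset.sum_eq_single i (fun j _ hj => by rw [hJ.2 i j (Ne.symm hj), zero_mul])
      (by simp)
  rw [h1, abs_mul]
  rcases hJ.1 i with h | h <;> simp [h, abs_nonneg]

lemma op_act_le {a : ℕ} (J : Matrix (Fin a) (Fin a) ℝ) (hJ : IsActivation J) :
    F.op J ≤ 1 := by
  refine F.op_le_of _ _ zero_le_one fun x => ?_
  rw [one_mul]
  exact F.act_mulVec_le J hJ x

lemma op_one_le {a : ℕ} : F.op (1 : Matrix (Fin a) (Fin a) ℝ) ≤ 1 :=
  F.op_le_of _ _ zero_le_one fun x => by rw [Matrix.one_mulVec, one_mul]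

lemma op_add_le {a b : ℕ} (A B : Matrix (Fin a) (Fin b) ℝ)
    (hA : 0 ≤ F.op A) (hB : 0 ≤ F.op B) : F.op (A + B) ≤ F.op A + F.op B := by
  refine F.op_le_of _ _ (add_nonneg hA hB) fun x => ?_
  rw [Matrix.add_mulVec]
  calc F.N a (A.mulVec x + B.mulVec x) ≤ F.N a (A.mulVec x) + F.N a (B.mulVec x) :=
        F.add_le a _ _
    _ ≤ F.op A * F.N b x + F.op B * F.N b x :=
        add_le_add (F.n_mulVec_le A x) (F.n_mulVec_le B x)
    _ = (F.op A + F.op B) * F.N b x := by ring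

lemma op_mcast {a a' b b' : ℕ} (ha : a = a') (hb : b = b') (M : Matrix (Fin a) (Fin b) ℝ) :
    F.op (mcast ha hb M) = F.op M := by
  subst ha; subst hb
  have : mcast rfl rfl M = M := rfl
  rw [this]

end NormFamily

section ProdSegLemmas

variable {α : Type*} [Monoid α]

lemma prodSeg_empty (f : ℕ → α) {a n : ℕ} (h : n < a) : prodSeg f a n = 1 := by
  unfold prodSeg
  have h0 : n + 1 - a = 0 := by omega
  rw [h0]
  simp

lemma prodSeg_split (f : ℕ → α) {a N n : ℕ} (h1 : a ≤ N + 1) (h2 : N ≤ n) :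
    prodSeg f a n = prodSeg f (N + 1) n * prodSeg f a N := by
  unfold prodSeg
  have key : List.range' a (N + 1 - a) ++ List.range' (N + 1) (n - N) =
      List.range' a (n + 1 - a) := by
    have h3 := List.range'_append (s := a) (m := N + 1 - a) (n := n - N) (step := 1)
    have h4 : a + 1 * (N + 1 - a) = N + 1 := by omega
    have h5 : N + 1 - a + (n - N) = n + 1 - a := by omega
    rw [h4, h5] at h3
    exact h3
  have h6 : n + 1 - (N + 1) = n - N := by omega
  rw [h6, ← key, List.reverse_append, List.map_append, List.prod_append]

lemma prodSeg_self (f : ℕ → α) (a : ℕ) : prodSeg f a a = f a := by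
  unfold prodSeg
  have h0 : a + 1 - a = 1 := by omega
  rw [h0]
  simp

lemma prodSeg_succ (f : ℕ → α) {a n : ℕ} (h : a ≤ n + 1) :
    prodSeg f a (n + 1) = f (n + 1) * prodSeg f a n := by
  rw [prodSeg_split f h (Nat.le_succ n), prodSeg_self]

end ProdSegLemmas

theorem stmt3 (F : NormFamily)
    (d : ℕ) (hd : 0 < d)
    (q : ℕ → ℕ) (hq : ∀ k, 0 < q k) (hqb : ∃ Q, ∀ k, q k ≤ Q)
    (c : ℕ → ℕ → ℕ) (hcpos : ∀ k m, m ≤ q k → 0 < c k m)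
    (hc0 : ∀ k, c k 0 = d) (hcq : ∀ k, c k (q k) = d)
    (W : ∀ k m, Matrix (Fin (c k (m+1))) (Fin (c k m)) ℝ)
    (b : ∀ k m, Fin (c k (m+1)) → ℝ)
    (J : ∀ k m, Matrix (Fin (c k (m+1))) (Fin (c k (m+1))) ℝ)
    (hJ : ∀ k m, IsActivation (J k m))
    (hb : Summable fun k => ∑ m ∈ Finset.range (q k),
      (∏ m' ∈ Finset.Ico (m+1) (q k), F.op (W k m')) * F.N (c k (m+1)) (b k m))
    (htail : ∀ a : ℕ, ∃ L, Tendsto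
      (fun n => prodSeg
        (fun k => blockMat d (q k) (hq k) (c k) (hc0 k) (hcq k) (W k) (J k)) a n)
      atTop (nhds L))
    (C₁ : ℝ) (hC₁ : 0 < C₁)
    (hbd : ∀ n' n : ℕ, n' ≤ n →
      ∏ k ∈ Finset.Icc n' n, ((∏ m ∈ Finset.range (q k), F.op (W k m)) + 1) ≤ C₁) :
    ∃ L, Tendsto (fun n => Bseq d q hq c hc0 hcq W b J n) atTop (nhds L) := by
  classical
  set g : ℕ → Matrix (Fin d) (Fin d) ℝ :=
    fun k => blockMat d (q k) (hq k) (c k) (hc0 k) (hcq k) (W k) (J k) with hg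
  set v : ℕ → Fin d → ℝ :=
    fun k => blockBias d (q k) (c k) (hcq k) (W k) (b k) (J k) with hv
  set sf : ℕ → ℝ := fun k => ∑ m ∈ Finset.range (q k),
      (∏ m' ∈ Finset.Ico (m+1) (q k), F.op (W k m')) * F.N (c k (m+1)) (b k m) with hsf
  set B : ℕ → Fin d → ℝ := fun n => Bseq d q hq c hc0 hcq W b J n with hBdef
  have hB : ∀ n, B n = ∑ k ∈ Finset.range (n+1), (prodSeg g (k+1) n).mulVec (v k) := by
    intro n
    rw [hBdef, hg, hv]
    rfl
  have hWop : ∀ k m, m < q k → 0 ≤ F.op (W k m) := fun k m hm =>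
    F.op_nonneg (hcpos k m (le_of_lt hm)) _
  have hop_inner : ∀ k a m, a + m ≤ q k →
      F.op (innerProdFrom (c k) (W k) (J k) a m) ≤ ∏ i ∈ Finset.range m, F.op (W k (a+i)) := by
    intro k a m
    induction m with
    | zero => intro _; rw [Finset.prod_range_zero]; exact F.op_one_le
    | succ m ih =>
      intro hm
      have hm' : a + m ≤ q k := by omega
      have h1 : innerProdFrom (c k) (W k) (J k) a (m+1) =
          (J k (a+m) * W k (a+m)) * innerProdFrom (c k) (W k) (J k) a m := rfl
      rw [h1]
      have hd1 : 0 < c k (a+m) := hcpos k _ hm'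
      have hd2 : 0 < c k a := hcpos k a (by omega)
      have hd3 : 0 < c k (a+m+1) := hcpos k _ (by omega)
      have hJW : F.op (J k (a+m) * W k (a+m)) ≤ F.op (W k (a+m)) := by
        calc F.op (J k (a+m) * W k (a+m)) ≤ F.op (J k (a+m)) * F.op (W k (a+m)) :=
              F.op_mul_le hd3 hd1 _ _
          _ ≤ 1 * F.op (W k (a+m)) :=
              mul_le_mul_of_nonneg_right (F.op_act_le _ (hJ k (a+m))) (hWop k (a+m) (by omega))
          _ = F.op (W k (a+m)) := one_mul _
      calc F.op ((J k (a+m) * W k (a+m)) * innerProdFrom (c k) (W k) (J k) a m)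
          ≤ F.op (J k (a+m) * W k (a+m)) * F.op (innerProdFrom (c k) (W k) (J k) a m) :=
            F.op_mul_le hd1 hd2 _ _
        _ ≤ F.op (W k (a+m)) * ∏ i ∈ Finset.range m, F.op (W k (a+i)) := by
            refine mul_le_mul hJW (ih hm') (F.op_nonneg hd2 _) (hWop k (a+m) (by omega))
        _ = ∏ i ∈ Finset.range (m+1), F.op (W k (a+i)) := by
            rw [Finset.prod_range_succ]; ring
  have hbnd0 : ∀ k, (0:ℝ) ≤ ∏ m ∈ Finset.range (q k), F.op (W k m) := fun k =>
    Finset.prod_nonneg fun m hm => hWop k m (Finset.mem_range.mp hm)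
  have hopg : ∀ k, F.op (g k) ≤ (∏ m ∈ Finset.range (q k), F.op (W k m)) + 1 := by
    intro k
    have hd4 : 0 < c k (q k - 1 + 1) := by
      have h : q k - 1 + 1 = q k := Nat.succ_pred_eq_of_pos (hq k)
      rw [h]; exact hcpos k _ le_rfl
    have hA0 : 0 ≤ F.op (mcast ((congrArg (c k) (Nat.zero_add (q k))).trans (hcq k)) (hc0 k)
        (innerProdFrom (c k) (W k) (J k) 0 (q k))) := by
      rw [F.op_mcast]
      exact F.op_nonneg (hcpos k 0 (Nat.zero_le _)) _
    have hB0 : 0 ≤ F.op (mcast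
        (show c k (q k - 1 + 1) = d from
          (congrArg (c k) (Nat.succ_pred_eq_of_pos (hq k))).trans (hcq k))
        (show c k (q k - 1 + 1) = d from
          (congrArg (c k) (Nat.succ_pred_eq_of_pos (hq k))).trans (hcq k))
        (J k (q k - 1))) := by
      rw [F.op_mcast]
      exact F.op_nonneg hd4 _
    have h := F.op_add_le _ _ hA0 hB0
    rw [F.op_mcast, F.op_mcast] at h
    refine le_trans h (add_le_add ?_ (F.op_act_le _ (hJ k _)))
    have h2 := hop_inner k 0 (q k) (by omega)
    exact le_trans h2 (le_of_eq (Finset.prod_congr rfl fun i _ => by rw [Nat.zero_add]))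
  have hC₁1 : (1:ℝ) ≤ C₁ := by
    have h := hbd 0 0 le_rfl
    have h2 : (1:ℝ) ≤ ∏ k ∈ Finset.Icc 0 0, ((∏ m ∈ Finset.range (q k), F.op (W k m)) + 1) := by
      simp only [Finset.Icc_self, Finset.prod_singleton]
      linarith [hbnd0 0]
    linarith
  have hAbnd : ∀ n a, F.op (prodSeg g a n) ≤
      ∏ k ∈ Finset.Icc a n, ((∏ m ∈ Finset.range (q k), F.op (W k m)) + 1) := by
    intro n
    induction n with
    | zero =>
      intro a
      rcases Nat.eq_zero_or_pos a with ha | ha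
      · subst ha
        rw [prodSeg_self]
        simpa using hopg 0
      · rw [prodSeg_empty g ha, Finset.Icc_eq_empty (by omega), Finset.prod_empty]
        exact F.op_one_le
    | succ n ih =>
      intro a
      by_cases ha : a ≤ n + 1
      · rw [prodSeg_succ g ha, Finset.prod_Icc_succ_top ha]
        calc F.op (g (n+1) * prodSeg g a n) ≤ F.op (g (n+1)) * F.op (prodSeg g a n) :=
              F.op_mul_le hd hd _ _
          _ ≤ ((∏ m ∈ Finset.range (q (n+1)), F.op (W (n+1) m)) + 1) *
              ∏ k ∈ Finset.Icc a n, ((∏ m ∈ Finset.range (q k), F.op (W k m)) + 1) := by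
              refine mul_le_mul (hopg _) (ih a) (F.op_nonneg hd _) ?_
              linarith [hbnd0 (n+1)]
          _ = (∏ k ∈ Finset.Icc a n, ((∏ m ∈ Finset.range (q k), F.op (W k m)) + 1)) *
              ((∏ m ∈ Finset.range (q (n+1)), F.op (W (n+1) m)) + 1) := mul_comm _ _
      · rw [prodSeg_empty g (by omega), Finset.Icc_eq_empty (by omega), Finset.prod_empty]
        exact F.op_one_le
  have hopP : ∀ a n, F.op (prodSeg g a n) ≤ C₁ := by
    intro a n
    refine le_trans (hAbnd n a) ?_
    by_cases h : a ≤ n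
    · exact hbd a n h
    · rw [Finset.Icc_eq_empty h, Finset.prod_empty]
      exact hC₁1
  have hNv : ∀ k, F.N d (v k) ≤ sf k := by
    intro k
    rw [hv, hsf]
    dsimp only
    unfold blockBias
    rw [← Finset.sum_attach (Finset.range (q k)) (fun m =>
      (∏ m' ∈ Finset.Ico (m+1) (q k), F.op (W k m')) * F.N (c k (m+1)) (b k m))]
    refine le_trans (F.n_sum_le d _ _) (Finset.sum_le_sum fun m _ => ?_)
    have hm : m.1 < q k := Finset.mem_range.mp m.2
    refine le_trans (F.n_mulVec_le _ _) ?_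
    rw [F.op_mcast]
    refine mul_le_mul ?_ (F.act_mulVec_le _ (hJ k m.1) _) (F.n_nonneg _ _) ?_
    · rw [Finset.prod_Ico_eq_prod_range]
      exact hop_inner k (m.1+1) (q k - (m.1+1)) (by omega)
    · exact Finset.prod_nonneg fun m' hm' => hWop k m' (Finset.mem_Ico.mp hm').2
  have hdec : ∀ N n, N ≤ n → B n = (prodSeg g (N+1) n).mulVec (B N) +
      ∑ k ∈ Finset.Ico (N+1) (n+1), (prodSeg g (k+1) n).mulVec (v k) := by
    intro N n hNn
    have h2 : (prodSeg g (N+1) n).mulVec (∑ k ∈ Finset.range (N+1),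
        (prodSeg g (k+1) N).mulVec (v k))
        = ∑ k ∈ Finset.range (N+1), (prodSeg g (N+1) n).mulVec
            ((prodSeg g (k+1) N).mulVec (v k)) := by
      exact Matrix.mulVec_sum _ _ _
    have h3 : ∑ k ∈ Finset.range (N+1), (prodSeg g (k+1) n).mulVec (v k)
        = (prodSeg g (N+1) n).mulVec (B N) := by
      rw [hB N, h2]
      refine Finset.sum_congr rfl fun k hk => ?_
      rw [Matrix.mulVec_mulVec, ← prodSeg_split g
        (Nat.succ_le_succ (Nat.lt_succ_iff.mp (Finset.mem_range.mp hk))) hNn]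
    calc B n = ∑ k ∈ Finset.Ico 0 (n+1), (prodSeg g (k+1) n).mulVec (v k) := by
          rw [hB n, Finset.range_eq_Ico]
      _ = ∑ k ∈ Finset.Ico 0 (N+1), (prodSeg g (k+1) n).mulVec (v k)
          + ∑ k ∈ Finset.Ico (N+1) (n+1), (prodSeg g (k+1) n).mulVec (v k) :=
          (Finset.sum_Ico_consecutive _ (Nat.zero_le _) (by omega)).symm
      _ = (prodSeg g (N+1) n).mulVec (B N)
          + ∑ k ∈ Finset.Ico (N+1) (n+1), (prodSeg g (k+1) n).mulVec (v k) := by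
          rw [← Finset.range_eq_Ico, h3]
  set C₂ : ℝ := ∑ i : Fin d, (F.N d (Pi.single i 1))⁻¹ with hC₂
  have hC₂0 : 0 ≤ C₂ :=
    Finset.sum_nonneg fun i _ => inv_nonneg.mpr (le_of_lt (F.single_pos d i))
  have hcmp : ∀ x : Fin d → ℝ, ‖x‖ ≤ C₂ * F.N d x := by
    intro x
    refine (pi_norm_le_iff_of_nonneg (mul_nonneg hC₂0 (F.n_nonneg d x))).mpr fun i => ?_
    rw [Real.norm_eq_abs]
    have h1 : |x i| ≤ (F.N d (Pi.single i 1))⁻¹ * F.N d x := by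
      rw [inv_mul_eq_div]
      exact F.abs_le_div d x i
    refine le_trans h1 (mul_le_mul_of_nonneg_right ?_ (F.n_nonneg d x))
    exact Finset.single_le_sum (fun j _ => inv_nonneg.mpr (le_of_lt (F.single_pos d j)))
      (Finset.mem_univ i)
  have hsf0 : ∀ k, 0 ≤ sf k := by
    intro k
    rw [hsf]
    refine Finset.sum_nonneg fun m hm => mul_nonneg ?_ (F.n_nonneg _ _)
    exact Finset.prod_nonneg fun m' hm' => hWop k m' (Finset.mem_Ico.mp hm').2
  have hTc : CauchySeq (fun n => ∑ k ∈ Finset.range n, sf k) :=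
    hb.hasSum.tendsto_sum_nat.cauchySeq
  apply cauchySeq_tendsto_of_complete
  rw [Metric.cauchySeq_iff]
  intro ε hε
  have hC₂1 : (0:ℝ) < C₂ + 1 := by linarith
  set ε' : ℝ := ε / (4 * (C₂ + 1) * C₁) with hε'def
  have hε' : 0 < ε' := by
    rw [hε'def]
    positivity
  obtain ⟨N₀, hN₀⟩ := Metric.cauchySeq_iff.mp hTc ε' hε'
  obtain ⟨Lm, hLm⟩ := htail (N₀ + 1)
  have hu : Tendsto (fun n => (prodSeg g (N₀+1) n).mulVec (B N₀)) atTop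
      (nhds (Lm.mulVec (B N₀))) :=
    (((Continuous.matrix_mulVec continuous_id continuous_const).tendsto Lm).comp hLm : _)
  obtain ⟨N₁, hN₁⟩ := Metric.cauchySeq_iff.mp hu.cauchySeq (ε/2) (by linarith)
  have hR : ∀ p, N₀ ≤ p →
      ‖∑ k ∈ Finset.Ico (N₀+1) (p+1), (prodSeg g (k+1) p).mulVec (v k)‖ ≤ ε/4 := by
    intro p hp
    have h1 : F.N d (∑ k ∈ Finset.Ico (N₀+1) (p+1), (prodSeg g (k+1) p).mulVec (v k))
        ≤ ∑ k ∈ Finset.Ico (N₀+1) (p+1), C₁ * sf k := by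
      refine le_trans (F.n_sum_le d _ _) (Finset.sum_le_sum fun k _ => ?_)
      refine le_trans (F.n_mulVec_le _ _) ?_
      exact mul_le_mul (hopP (k+1) p) (hNv k) (F.n_nonneg _ _) (le_of_lt hC₁)
    have h2 : ∑ k ∈ Finset.Ico (N₀+1) (p+1), sf k < ε' := by
      have h3 := hN₀ (p+1) (by omega) (N₀+1) (by omega)
      rw [Real.dist_eq] at h3
      have h4 : ∑ k ∈ Finset.Ico (N₀+1) (p+1), sf k
          = ∑ k ∈ Finset.range (p+1), sf k - ∑ k ∈ Finset.range (N₀+1), sf k := by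
        rw [Finset.sum_Ico_eq_sub _ (by omega)]
      rw [h4]
      exact lt_of_le_of_lt (le_abs_self _) h3
    calc ‖∑ k ∈ Finset.Ico (N₀+1) (p+1), (prodSeg g (k+1) p).mulVec (v k)‖
        ≤ C₂ * F.N d (∑ k ∈ Finset.Ico (N₀+1) (p+1), (prodSeg g (k+1) p).mulVec (v k)) :=
          hcmp _
      _ ≤ C₂ * (C₁ * ∑ k ∈ Finset.Ico (N₀+1) (p+1), sf k) := by
          refine mul_le_mul_of_nonneg_left ?_ hC₂0
          rw [Finset.mul_sum]
          exact h1
      _ ≤ C₂ * (C₁ * ε') :=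
          mul_le_mul_of_nonneg_left
            (mul_le_mul_of_nonneg_left (le_of_lt h2) (le_of_lt hC₁)) hC₂0
      _ ≤ ε/4 := by
          have hprod : ε' * (4 * (C₂ + 1) * C₁) = ε := by
            rw [hε'def]
            field_simp
          nlinarith [mul_nonneg (le_of_lt hε') (le_of_lt hC₁)]
  refine ⟨max N₀ N₁, fun m hm n hn => ?_⟩
  have hm0 : N₀ ≤ m := le_trans (le_max_left _ _) hm
  have hn0 : N₀ ≤ n := le_trans (le_max_left _ _) hn
  rw [dist_eq_norm, hdec N₀ m hm0, hdec N₀ n hn0]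
  have key : ((prodSeg g (N₀+1) m).mulVec (B N₀)
        + ∑ k ∈ Finset.Ico (N₀+1) (m+1), (prodSeg g (k+1) m).mulVec (v k))
      - ((prodSeg g (N₀+1) n).mulVec (B N₀)
        + ∑ k ∈ Finset.Ico (N₀+1) (n+1), (prodSeg g (k+1) n).mulVec (v k))
      = ((prodSeg g (N₀+1) m).mulVec (B N₀) - (prodSeg g (N₀+1) n).mulVec (B N₀))
      + ((∑ k ∈ Finset.Ico (N₀+1) (m+1), (prodSeg g (k+1) m).mulVec (v k))
        - ∑ k ∈ Finset.Ico (N₀+1) (n+1), (prodSeg g (k+1) n).mulVec (v k)) := by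
    abel
  rw [key]
  have hd1 := hN₁ m (le_trans (le_max_right _ _) hm) n (le_trans (le_max_right _ _) hn)
  rw [dist_eq_norm] at hd1
  calc ‖((prodSeg g (N₀+1) m).mulVec (B N₀) - (prodSeg g (N₀+1) n).mulVec (B N₀))
      + ((∑ k ∈ Finset.Ico (N₀+1) (m+1), (prodSeg g (k+1) m).mulVec (v k))
        - ∑ k ∈ Finset.Ico (N₀+1) (n+1), (prodSeg g (k+1) n).mulVec (v k))‖
      ≤ ‖(prodSeg g (N₀+1) m).mulVec (B N₀) - (prodSeg g (N₀+1) n).mulVec (B N₀)‖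
        + ‖(∑ k ∈ Finset.Ico (N₀+1) (m+1), (prodSeg g (k+1) m).mulVec (v k))
          - ∑ k ∈ Finset.Ico (N₀+1) (n+1), (prodSeg g (k+1) n).mulVec (v k)‖ :=
        norm_add_le _ _
    _ ≤ ‖(prodSeg g (N₀+1) m).mulVec (B N₀) - (prodSeg g (N₀+1) n).mulVec (B N₀)‖
        + (‖∑ k ∈ Finset.Ico (N₀+1) (m+1), (prodSeg g (k+1) m).mulVec (v k)‖
          + ‖∑ k ∈ Finset.Ico (N₀+1) (n+1), (prodSeg g (k+1) n).mulVec (v k)‖) := by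
        have := norm_sub_le (∑ k ∈ Finset.Ico (N₀+1) (m+1), (prodSeg g (k+1) m).mulVec (v k))
          (∑ k ∈ Finset.Ico (N₀+1) (n+1), (prodSeg g (k+1) n).mulVec (v k))
        linarith
    _ < ε/2 + (ε/4 + ε/4) := by
        have h5 := hR m hm0
        have h6 := hR n hn0
        exact add_lt_add_of_lt_of_le hd1 (add_le_add h5 h6)
    _ = ε := by ring

end
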